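/- Perfect unlinkability of multi-hop re-signatures: fix ℓ ≥ 1, μ ∈ ZMod p, nonzero x_i, x_j ∈ ZMod p and nonzero t_1, …, t_ℓ ∈ ZMod p. The pushforward, under the map sending (r_0, …, r_ℓ) to the Re-Sign output tuple (σ_0^(r_0⋯r_ℓ), …) described by σ'_0 = g^(μ·x_i·t_1⋯t_ℓ·r_0⋯r_ℓ), σ'_k = g^(x_i·t_1⋯t_{ℓ+1−k}·r_0⋯r_{ℓ+1−k}) for 1 ≤ k ≤ ℓ, σ'_{ℓ+1} = g^(x_i·r_0), σ'_{ℓ+2} = g^(r_0·x_i·x_j⁻¹), σ'_{ℓ+2+m} = g^(t_m·r_m) for 1 ≤ m ≤ ℓ, of the uniform PMF on (ℓ+1)-tuples of nonzero elements of ZMod p, equals the pushforward, under the map sending (s_0, …, s_ℓ) to the fresh level-(ℓ+2) signature (g^(μ·x_j·s_0⋯s_ℓ), g^(x_j·s_0⋯s_ℓ), g^(x_j·s_0⋯s_{ℓ−1}), …, g^(x_j·s_0), g^(s_0), …, g^(s_ℓ)), of the uniform PMF on (ℓ+1)-tuples of nonzero elements of ZMod p. -/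

import Mathlib

instance nonzero_nonempty (p : ℕ) [Fact p.Prime] : Nonempty {z : ZMod p // z ≠ 0} :=
  ⟨⟨1, one_ne_zero⟩⟩


private lemma map_equiv_uniform_aux {α : Type*} [Fintype α] [Nonempty α] (e : α ≃ α) :
    PMF.map e (PMF.uniformOfFintype α) = PMF.uniformOfFintype α := by
  ext b
  rw [PMF.map_apply, tsum_eq_single (e.symm b)]
  · simp
  · intro a ha
    rw [if_neg]
    intro h
    exact ha (by simp [h])

/-- Perfect unlinkability of multi-hop re-signatures: the distribution of the
Re-Sign output tuple, over uniform `(r_0,…,r_ℓ)` with nonzero entries, equals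
the distribution of a fresh level-(ℓ+2) signature under `x_j`, over uniform
`(s_0,…,s_ℓ)` with nonzero entries. -/
theorem stmt_5 {p : ℕ} [Fact p.Prime] {G : Type*} [CommGroup G]
    (g : G) (hg : orderOf g = p)
    (ℓ : ℕ) (hℓ : 1 ≤ ℓ) (μ xi xj : ZMod p) (hxi : xi ≠ 0) (hxj : xj ≠ 0)
    (t : ℕ → ZMod p) (ht : ∀ k, 1 ≤ k → k ≤ ℓ → t k ≠ 0)
    -- the Re-Sign output tuple, as a function of the randomizers (r_0, …, r_ℓ)
    (f₁ : (Fin (ℓ + 1) → {z : ZMod p // z ≠ 0}) → (Fin (2 * ℓ + 3) → G))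
    (hf₁0 : ∀ r, f₁ r ⟨0, by omega⟩ =
      g ^ ((μ * xi * (∏ i ∈ Finset.Icc 1 ℓ, t i) * ∏ i, (r i).1).val))
    (hf₁k : ∀ r, ∀ k, ∀ _h1 : 1 ≤ k, ∀ _h2 : k ≤ ℓ, f₁ r ⟨k, by omega⟩ =
      g ^ ((xi * (∏ i ∈ Finset.Icc 1 (ℓ + 1 - k), t i) *
        ∏ i ∈ Finset.univ.filter (fun i : Fin (ℓ + 1) => i.val ≤ ℓ + 1 - k),
          (r i).1).val))
    (hf₁l1 : ∀ r, f₁ r ⟨ℓ + 1, by omega⟩ = g ^ ((xi * (r 0).1).val))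
    (hf₁l2 : ∀ r, f₁ r ⟨ℓ + 2, by omega⟩ = g ^ (((r 0).1 * xi * xj⁻¹).val))
    (hf₁m : ∀ r, ∀ m, ∀ h1 : 1 ≤ m, ∀ h2 : m ≤ ℓ, f₁ r ⟨ℓ + 2 + m, by omega⟩ =
      g ^ ((t m * (r ⟨m, by omega⟩).1).val))
    -- a fresh level-(ℓ+2) signature under x_j, as a function of (s_0, …, s_ℓ)
    (f₂ : (Fin (ℓ + 1) → {z : ZMod p // z ≠ 0}) → (Fin (2 * ℓ + 3) → G))
    (hf₂0 : ∀ s, f₂ s ⟨0, by omega⟩ = g ^ ((μ * xj * ∏ i, (s i).1).val))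
    (hf₂k : ∀ s, ∀ k, ∀ _h1 : 1 ≤ k, ∀ _h2 : k ≤ ℓ + 1, f₂ s ⟨k, by omega⟩ =
      g ^ ((xj *
        ∏ i ∈ Finset.univ.filter (fun i : Fin (ℓ + 1) => i.val ≤ ℓ + 1 - k),
          (s i).1).val))
    (hf₂m : ∀ s, ∀ m, ∀ h1 : m ≤ ℓ, f₂ s ⟨ℓ + 2 + m, by omega⟩ =
      g ^ ((s ⟨m, by omega⟩).1.val)) :
    PMF.map f₁ (PMF.uniformOfFintype (Fin (ℓ + 1) → {z : ZMod p // z ≠ 0}))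
      = PMF.map f₂ (PMF.uniformOfFintype (Fin (ℓ + 1) → {z : ZMod p // z ≠ 0})) := by
  classical
  have hxj' : (xj : ZMod p)⁻¹ ≠ 0 := inv_ne_zero hxj
  set c : Fin (ℓ + 1) → {z : ZMod p // z ≠ 0} := fun i =>
    if h : (i : ℕ) = 0 then ⟨xi * xj⁻¹, mul_ne_zero hxi hxj'⟩
    else ⟨t i, ht i (Nat.one_le_iff_ne_zero.2 h) (by omega)⟩ with hc
  set e : (Fin (ℓ + 1) → {z : ZMod p // z ≠ 0}) ≃ (Fin (ℓ + 1) → {z : ZMod p // z ≠ 0}) :=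
    Equiv.piCongrRight (fun i =>
      { toFun := fun z => ⟨(c i).1 * z.1, mul_ne_zero (c i).2 z.2⟩
        invFun := fun z => ⟨(c i).1⁻¹ * z.1, mul_ne_zero (inv_ne_zero (c i).2) z.2⟩
        left_inv := fun z => Subtype.ext (inv_mul_cancel_left₀ (c i).2 z.1)
        right_inv := fun z => Subtype.ext (mul_inv_cancel_left₀ (c i).2 z.1) }) with he
  have heval : ∀ r i, (e r i).1 = (c i).1 * (r i).1 := fun r i => rfl
  have hprod : ∀ (r : Fin (ℓ + 1) → {z : ZMod p // z ≠ 0}) (S : Finset (Fin (ℓ + 1))),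
      (∏ i ∈ S, (e r i).1) = (∏ i ∈ S, (c i).1) * ∏ i ∈ S, (r i).1 := by
    intro r S
    simp only [heval, Finset.prod_mul_distrib]
  have hA : ∀ n, n ≤ ℓ →
      (∏ i ∈ Finset.univ.filter (fun i : Fin (ℓ + 1) => i.val ≤ n), (c i).1)
        = xi * xj⁻¹ * ∏ j ∈ Finset.Icc 1 n, t j := by
    intro n hn
    have h0 : (⟨0, by omega⟩ : Fin (ℓ + 1)) ∈
        Finset.univ.filter (fun i : Fin (ℓ + 1) => i.val ≤ n) := by simp
    rw [← Finset.mul_prod_erase _ _ h0]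
    have h0v : (c ⟨0, by omega⟩).1 = xi * xj⁻¹ := by simp [hc]
    rw [h0v]
    congr 1
    refine Finset.prod_bij (fun i _ => (i : ℕ)) ?_ ?_ ?_ ?_
    · intro a ha
      simp only [Finset.mem_erase, Finset.mem_filter, Finset.mem_univ, true_and] at ha
      have hne : (a : ℕ) ≠ 0 := fun h => ha.1 (Fin.ext (by simpa using h))
      simp only [Finset.mem_Icc]
      exact ⟨by omega, ha.2⟩
    · intro a ha b hb hab
      exact Fin.ext hab
    · intro j hj
      simp only [Finset.mem_Icc] at hj
      refine ⟨⟨j, by omega⟩, ?_, rfl⟩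
      simp only [Finset.mem_erase, Finset.mem_filter, Finset.mem_univ, true_and]
      refine ⟨?_, hj.2⟩
      intro h
      have : j = 0 := by simpa using congrArg Fin.val h
      omega
    · intro a ha
      simp only [Finset.mem_erase, Finset.mem_filter, Finset.mem_univ, true_and] at ha
      have hne : (a : ℕ) ≠ 0 := fun h => ha.1 (Fin.ext (by simpa using h))
      simp [hc, hne, show a ≠ 0 from fun h => hne (by simp [h])]
  have huniv : (Finset.univ : Finset (Fin (ℓ + 1)))
      = Finset.univ.filter (fun i : Fin (ℓ + 1) => i.val ≤ ℓ) := by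
    ext i
    simp [Fin.is_le]
  have key : ∀ r, f₁ r = f₂ (e r) := by
    intro r
    funext k
    obtain ⟨kv, hkv⟩ := k
    by_cases hk0 : kv = 0
    · subst hk0
      rw [hf₁0, hf₂0]
      congr 2
      rw [huniv, hprod, hA ℓ le_rfl, ← huniv]
      field_simp <;> ring
    · by_cases hkl : kv ≤ ℓ
      · rw [hf₁k r kv (by omega) hkl, hf₂k (e r) kv (by omega) (by omega)]
        congr 2
        rw [hprod, hA (ℓ + 1 - kv) (by omega)]
        field_simp <;> ring
      · by_cases hkl1 : kv = ℓ + 1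
        · subst hkl1
          rw [hf₁l1, hf₂k (e r) (ℓ + 1) (by omega) le_rfl]
          congr 2
          have hfilt : Finset.univ.filter (fun i : Fin (ℓ + 1) => i.val ≤ ℓ + 1 - (ℓ + 1))
              = {(0 : Fin (ℓ + 1))} := by
            ext i
            simp only [Finset.mem_filter, Finset.mem_univ, true_and, Finset.mem_singleton,
              Fin.ext_iff, Fin.val_zero]
            constructor <;> intro h <;> omega
          rw [hprod, hA (ℓ + 1 - (ℓ + 1)) (by omega), hfilt, Finset.prod_singleton,
            show Finset.Icc 1 (ℓ + 1 - (ℓ + 1)) = ∅ from by simp, Finset.prod_empty, mul_one]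
          field_simp <;> ring
        · by_cases hkl2 : kv = ℓ + 2
          · subst hkl2
            rw [hf₁l2, hf₂m (e r) 0 (by omega)]
            have h00 : (⟨0, by omega⟩ : Fin (ℓ + 1)) = 0 := rfl
            rw [h00, heval]
            have hc0 : (c 0).1 = xi * xj⁻¹ := by simp [hc]
            rw [hc0]
            congr 2
            ring
          · obtain ⟨m, rfl⟩ : ∃ m, kv = ℓ + 2 + m := ⟨kv - (ℓ + 2), by omega⟩
            have hm1 : 1 ≤ m := by omega
            have hm2 : m ≤ ℓ := by omega
            rw [hf₁m r m hm1 hm2, hf₂m (e r) m hm2]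
            rw [heval]
            have hcm : (c ⟨m, by omega⟩).1 = t m := by
              simp [hc, Nat.one_le_iff_ne_zero.1 hm1]
            rw [hcm]
  have : f₁ = f₂ ∘ e := funext key
  rw [this, ← PMF.map_comp, map_equiv_uniform_aux]
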